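/- Let u ∈ ℝ^{n+1} be a unit vector with all entries nonzero, let x₀ > 0, and let y : ℝ → ℝ be a function such that Φ_u(x, y(x)) = 0 for all x in some neighborhood of x₀ contained in (0, ∞), and such that y has derivative d at x₀. Then d·Σ_j x₀/(x₀² + (1/u_j − y(x₀))²) = Σ_j (−y(x₀) + u_j·(x₀² + y(x₀)²))/(x₀² + (1/u_j − y(x₀))²). -/

import Mathlib

/-- The continuous inverse cotangent with range `(0, π)`. -/
noncomputable def arccot (θ : ℝ) : ℝ := Real.pi / 2 - Real.arctan θ

/-- The lifting `Φ_u(x, y)` of the argument of `F_u(x + iy)` (for `x > 0`). -/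
noncomputable def Phi {m : ℕ} (u : Fin m → ℝ) (x y : ℝ) : ℝ :=
  x * ∑ j, u j
    - ∑ j ∈ Finset.univ.filter (fun j => 0 < u j), arccot ((1 / u j - y) / x)
    + ∑ j ∈ Finset.univ.filter (fun j => u j < 0), arccot (-(1 / u j - y) / x)

lemma hasDerivAt_arccot (θ : ℝ) : HasDerivAt arccot (-(1 / (1 + θ ^ 2))) θ := by
  have h := ((hasDerivAt_const θ (Real.pi / 2)).fun_sub (Real.hasDerivAt_arctan θ))
  simp only [zero_sub, one_div] at h ⊢
  exact h

theorem stmt16 (n : ℕ) (u : Fin (n + 1) → ℝ) (hu : ∑ j, (u j) ^ 2 = 1)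
    (hnz : ∀ j, u j ≠ 0) (x₀ : ℝ) (hx₀ : 0 < x₀) (y : ℝ → ℝ) (d : ℝ)
    (hnbhd : ∃ s ∈ nhds x₀, s ⊆ Set.Ioi (0 : ℝ) ∧ ∀ x ∈ s, Phi u x (y x) = 0)
    (hd : HasDerivAt y d x₀) :
    d * ∑ j, x₀ / (x₀ ^ 2 + (1 / u j - y x₀) ^ 2) =
      ∑ j, (-(y x₀) + u j * (x₀ ^ 2 + (y x₀) ^ 2)) / (x₀ ^ 2 + (1 / u j - y x₀) ^ 2) := by
  obtain ⟨s, hs, hspos, hzero⟩ := hnbhd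
  set y₀ := y x₀ with hy₀
  set δ : Fin (n+1) → ℝ := fun j => 1 / u j - y₀ with hδ
  set D : Fin (n+1) → ℝ := fun j => x₀ ^ 2 + (δ j) ^ 2 with hD
  have hDpos : ∀ j, 0 < D j := fun j => by positivity
  set A : Fin (n+1) → ℝ := fun j => (d * x₀ + δ j) / D j with hA
  have hx₀' : x₀ ≠ 0 := ne_of_gt hx₀
  -- derivative of inner quotient
  have hθ : ∀ j, HasDerivAt (fun x => (1 / u j - y x) / x)
      (((0 - d) * x₀ - (1 / u j - y x₀) * 1) / x₀ ^ 2) x₀ := fun j =>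
    ((hasDerivAt_const x₀ (1 / u j)).sub hd).div (hasDerivAt_id x₀) hx₀'
  -- derivative of arccot of the quotient
  have hpos : ∀ j, HasDerivAt (fun x => arccot ((1 / u j - y x) / x)) (A j) x₀ := by
    intro j
    have h := ((hasDerivAt_const x₀ (Real.pi / 2)).sub (hθ j).arctan)
    have heq : Real.pi / 2 - Real.arctan ((1 / u j - y x₀) / x₀) =
        arccot ((1 / u j - y x₀) / x₀) := rfl
    have h' : HasDerivAt (fun x => arccot ((1 / u j - y x) / x))
        (0 - 1 / (1 + ((1 / u j - y x₀) / x₀) ^ 2)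
          * (((0 - d) * x₀ - (1 / u j - y x₀) * 1) / x₀ ^ 2)) x₀ := h
    convert h' using 1
    have h1 : (1 : ℝ) + ((1 / u j - y x₀) / x₀) ^ 2 = D j / x₀ ^ 2 := by
      field_simp [hD, hδ]
      rfl
    rw [hA, h1]
    have hDj := (hDpos j).ne'
    field_simp
    ring
  have hneg : ∀ j, HasDerivAt (fun x => arccot (-(1 / u j - y x) / x)) (-(A j)) x₀ := by
    intro j
    have h := ((hasDerivAt_const x₀ (Real.pi / 2)).sub ((hθ j).neg).arctan)
    have h' : HasDerivAt (fun x => arccot (-((1 / u j - y x) / x)))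
        (0 - 1 / (1 + (-((1 / u j - y x₀) / x₀)) ^ 2)
          * (-(((0 - d) * x₀ - (1 / u j - y x₀) * 1) / x₀ ^ 2))) x₀ := h
    have h'' : HasDerivAt (fun x => arccot (-(1 / u j - y x) / x))
        (0 - 1 / (1 + (-((1 / u j - y x₀) / x₀)) ^ 2)
          * (-(((0 - d) * x₀ - (1 / u j - y x₀) * 1) / x₀ ^ 2))) x₀ := by
      simpa only [neg_div] using h'
    convert h'' using 1
    have h1 : (1 : ℝ) + (-((1 / u j - y x₀) / x₀)) ^ 2 = D j / x₀ ^ 2 := by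
      rw [neg_sq, hD, hδ]
      field_simp
      rfl
    rw [hA, h1]
    have hDj := (hDpos j).ne'
    field_simp
    ring
  -- derivative of Phi composed
  have hfE : HasDerivAt (fun x => Phi u x (y x))
      ((∑ j, u j)
        - ∑ j ∈ Finset.univ.filter (fun j => 0 < u j), A j
        + ∑ j ∈ Finset.univ.filter (fun j => u j < 0), (-(A j))) x₀ := by
    have h1 : HasDerivAt (fun x : ℝ => x * ∑ j, u j) (∑ j, u j) x₀ := by
      simpa using (hasDerivAt_id x₀).mul_const (∑ j, u j)
    have h2 : HasDerivAt (fun x => ∑ j ∈ Finset.univ.filter (fun j => 0 < u j),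
        arccot ((1 / u j - y x) / x))
        (∑ j ∈ Finset.univ.filter (fun j => 0 < u j), A j) x₀ :=
      HasDerivAt.fun_sum (fun j _ => hpos j)
    have h3 : HasDerivAt (fun x => ∑ j ∈ Finset.univ.filter (fun j => u j < 0),
        arccot (-(1 / u j - y x) / x))
        (∑ j ∈ Finset.univ.filter (fun j => u j < 0), (-(A j))) x₀ :=
      HasDerivAt.fun_sum (fun j _ => hneg j)
    exact (h1.sub h2).add h3
  -- the function is eventually 0
  have hf0 : HasDerivAt (fun x => Phi u x (y x)) 0 x₀ := by
    have hev : (fun x => Phi u x (y x)) =ᶠ[nhds x₀] fun _ => (0 : ℝ) :=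
      Filter.eventually_iff_exists_mem.mpr ⟨s, hs, fun x hx => hzero x hx⟩
    exact (hasDerivAt_const x₀ 0).congr_of_eventuallyEq hev
  have hE : (∑ j, u j)
        - ∑ j ∈ Finset.univ.filter (fun j => 0 < u j), A j
        + ∑ j ∈ Finset.univ.filter (fun j => u j < 0), (-(A j)) = 0 := hfE.unique hf0
  -- combine the filtered sums
  have hsplit : ∑ j ∈ Finset.univ.filter (fun j => 0 < u j), A j
      + ∑ j ∈ Finset.univ.filter (fun j => u j < 0), A j = ∑ j, A j := by
    rw [show (Finset.univ.filter (fun j => u j < 0)) =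
        (Finset.univ.filter (fun j => ¬ 0 < u j)) by
      apply Finset.filter_congr
      intro j _
      simp only [not_lt, eq_iff_iff]
      constructor
      · exact le_of_lt
      · intro h; exact lt_of_le_of_ne h (hnz j)]
    exact Finset.sum_filter_add_sum_filter_not _ _ _
  have hsumA : ∑ j, A j = ∑ j, u j := by
    rw [Finset.sum_neg_distrib] at hE
    linarith [hE, hsplit]
  -- per-term algebra
  have hkey : ∀ j, d * (x₀ / D j) - (-(y₀) + u j * (x₀ ^ 2 + y₀ ^ 2)) / D j
      = A j - u j := by
    intro j
    have hDj := (hDpos j).ne'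
    have huj := hnz j
    rw [hA]
    field_simp [hD, hδ]
    simp only [hD, hδ]
    field_simp
    ring
  have : ∑ j, (d * (x₀ / D j) - (-(y₀) + u j * (x₀ ^ 2 + y₀ ^ 2)) / D j)
      = ∑ j, (A j - u j) := Finset.sum_congr rfl (fun j _ => hkey j)
  rw [Finset.sum_sub_distrib, Finset.sum_sub_distrib, hsumA, sub_self] at this
  have hgoal : ∑ j, d * (x₀ / D j) = ∑ j, (-(y₀) + u j * (x₀ ^ 2 + y₀ ^ 2)) / D j :=
    by linarith
  calc d * ∑ j, x₀ / (x₀ ^ 2 + (1 / u j - y x₀) ^ 2)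
      = ∑ j, d * (x₀ / D j) := by rw [Finset.mul_sum]
    _ = ∑ j, (-(y₀) + u j * (x₀ ^ 2 + y₀ ^ 2)) / D j := hgoal
    _ = _ := rfl
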